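/- Let p be a prime, e a positive integer with gcd(e, p) = 1, and F a field of characteristic p. Suppose M and M' are free F[u]/(u^{ep})-modules of rank d and f : M → M' is an F[u]/(u^{ep})-linear map. Let (e_1, ..., e_d) be a basis of M. If f(e_1) ∈ u^{n+1} M' for some positive integer n with n + 1 ≤ ep, then the image of f does not contain u^n M'. -/

import Mathlib

set_option synthInstance.maxHeartbeats 1000000
set_option maxHeartbeats 4000000

abbrev TruncRing (F : Type*) [Field F] (N : ℕ) : Type _ :=
  Polynomial F ⧸ Ideal.span ({Polynomial.X ^ N} : Set (Polynomial F))

noncomputable def uElt (F : Type*) [Field F] (N : ℕ) : TruncRing F N :=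
  Ideal.Quotient.mk _ Polynomial.X

open Polynomial


theorem trunc_aux1 {F : Type*} [Field F] {N n : ℕ} (hn2 : n + 1 ≤ N)
    (c : F) (r : TruncRing F N)
    (h : algebraMap F (TruncRing F N) c * uElt F N ^ n = uElt F N ^ (n + 1) • r) :
    c = 0 := by
  rw [smul_eq_mul] at h
  obtain ⟨ρ, rfl⟩ := Ideal.Quotient.mk_surjective r
  have halg : algebraMap F (TruncRing F N) c
      = Ideal.Quotient.mk _ (C c) := rfl
  have hu : uElt F N = Ideal.Quotient.mk _ (X : F[X]) := rfl
  rw [halg, hu, ← map_pow, ← map_mul, ← map_pow, ← map_mul, Ideal.Quotient.eq,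
    Ideal.mem_span_singleton] at h
  obtain ⟨q, hq⟩ := h
  have h2 := congrArg (fun p : F[X] => p.coeff n) hq
  simp only [coeff_sub, coeff_C_mul, coeff_X_pow, X_pow_mul, coeff_mul_X_pow'] at h2
  rw [if_pos le_rfl, if_neg (show ¬ n + 1 ≤ n by omega), if_neg (show ¬ N ≤ n by omega)] at h2
  simpa using h2

theorem trunc_aux2 {F : Type*} [Field F] {N : ℕ} (r : TruncRing F N) :
    ∃ (c : F) (r' : TruncRing F N), r = algebraMap F (TruncRing F N) c + uElt F N * r' := by
  obtain ⟨ρ, rfl⟩ := Ideal.Quotient.mk_surjective r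
  refine ⟨ρ.coeff 0, Ideal.Quotient.mk _ ρ.divX, ?_⟩
  have halg : algebraMap F (TruncRing F N) (ρ.coeff 0)
      = Ideal.Quotient.mk _ (C (ρ.coeff 0)) := rfl
  have hu : uElt F N = Ideal.Quotient.mk _ (X : F[X]) := rfl
  rw [halg, hu, ← map_mul, ← map_add]
  congr 1
  rw [add_comm]
  exact (X_mul_divX_add ρ).symm

theorem trunc_upow {F : Type*} [Field F] {N : ℕ} : uElt F N ^ N = 0 := by
  have hu : uElt F N = Ideal.Quotient.mk _ (X : F[X]) := rfl
  rw [hu, ← map_pow, Ideal.Quotient.eq_zero_iff_mem]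
  exact Ideal.subset_span rfl

instance truncFinite (F : Type*) [Field F] (N : ℕ) : Module.Finite F (TruncRing F N) := by
  classical
  refine ⟨⟨(Finset.range N).image (fun k => uElt F N ^ k), ?_⟩⟩
  rw [eq_top_iff]
  rintro r -
  obtain ⟨ρ, rfl⟩ := Ideal.Quotient.mk_surjective r
  induction ρ using Polynomial.induction_on' with
  | add p q hp hq => rw [map_add]; exact Submodule.add_mem _ hp hq
  | monomial k a =>
    have hmk : Ideal.Quotient.mk (Ideal.span {(X : F[X]) ^ N}) (monomial k a)
        = a • uElt F N ^ k := by
      rw [← C_mul_X_pow_eq_monomial, map_mul, map_pow,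
        ← algebraMap_smul (TruncRing F N) a, smul_eq_mul]
      rfl
    rw [hmk]
    by_cases hk : k < N
    · exact Submodule.smul_mem _ _ (Submodule.subset_span
        (Finset.mem_coe.mpr (Finset.mem_image.mpr ⟨k, Finset.mem_range.mpr hk, rfl⟩)))
    · have : uElt F N ^ k = 0 := by
        have : k = N + (k - N) := by omega
        rw [this, pow_add, trunc_upow, zero_mul]
      rw [this, smul_zero]
      exact Submodule.zero_mem _

theorem trunc_main (F : Type*) [Field F] (N : ℕ) (d : ℕ) (hd : 0 < d)
    (M M' : Type*) [AddCommGroup M] [AddCommGroup M']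
    [Module (TruncRing F N) M] [Module (TruncRing F N) M']
    (bM : Module.Basis (Fin d) (TruncRing F N) M)
    (bM' : Module.Basis (Fin d) (TruncRing F N) M')
    (f : M →ₗ[TruncRing F N] M')
    (n : ℕ) (hn2 : n + 1 ≤ N)
    (hfe : ∃ m' : M', f (bM ⟨0, hd⟩) = uElt F N ^ (n + 1) • m') :
    ¬ ∀ m' : M', uElt F N ^ n • m' ∈ LinearMap.range f := by
  classical
  intro H
  set R := TruncRing F N with hR
  set u := uElt F N with hu
  letI : Module F M' := Module.compHom M' (algebraMap F R)
  haveI hT' : IsScalarTower F R M' := ⟨fun c r x => by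
    show (c • r) • x = (algebraMap F R c) • (r • x)
    rw [← algebraMap_smul R c r, smul_eq_mul, mul_smul]⟩
  haveI : Module.Finite R M' := Module.Finite.of_basis bM'
  haveI : Module.Finite F R := truncFinite F N
  haveI : Module.Finite F M' := Module.Finite.trans R M'
  -- the submodule u^{n+1} M'
  set U : Submodule R M' := LinearMap.range ((u ^ (n + 1)) • (LinearMap.id : M' →ₗ[R] M'))
    with hUdef
  have memU : ∀ x : M', x ∈ U ↔ ∃ y : M', u ^ (n + 1) • y = x := by
    intro x
    constructor
    · rintro ⟨y, rfl⟩; exact ⟨y, rfl⟩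
    · rintro ⟨y, rfl⟩; exact ⟨y, rfl⟩
  set Q := M' ⧸ U with hQ
  set π := U.mkQ with hπ
  have hπU : ∀ y : M', π (u ^ (n + 1) • y) = 0 := by
    intro y
    rw [hπ, Submodule.mkQ_apply, Submodule.Quotient.mk_eq_zero]
    exact (memU _).mpr ⟨y, rfl⟩
  set fb : M →ₗ[R] Q := π.comp f with hfb
  set g : Fin d → Q := fun i => π (u ^ n • bM' i) with hg
  have hg_range : ∀ i, g i ∈ LinearMap.range fb := by
    intro i
    obtain ⟨x, hx⟩ := H (bM' i)
    exact ⟨x, by rw [hfb, LinearMap.comp_apply, hx]⟩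
  have hgu : ∀ i, u • g i = 0 := by
    intro i
    rw [hg]
    show u • π (u ^ n • bM' i) = 0
    rw [← map_smul, smul_smul, ← pow_succ', hπU]
  have hf0 : fb (bM ⟨0, hd⟩) = 0 := by
    obtain ⟨m0, hm0⟩ := hfe
    rw [hfb, LinearMap.comp_apply, hm0, hπU]
  set S : Submodule R Q := LinearMap.range fb with hS
  have hSspan : S = Submodule.span R (Set.range (fun i => fb (bM i))) := by
    rw [hS, LinearMap.range_eq_map, ← bM.span_eq, Submodule.map_span, ← Set.range_comp]
    rfl
  set SF : Submodule F Q := S.restrictScalars F with hSF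
  have hmemSF : ∀ x : Q, x ∈ SF ↔ x ∈ S := fun _ => Iff.rfl
  -- the multiplication-by-u map, F-linearly
  set Φ : Q →ₗ[F] Q :=
    { toFun := fun x => u • x
      map_add' := fun x y => smul_add u x y
      map_smul' := fun c x => by
        show u • (c • x) = c • (u • x)
        rw [← algebraMap_smul R c x, ← algebraMap_smul R c (u • x), smul_smul, mul_comm,
          mul_smul] } with hΦ
  set W : Submodule F Q := SF.map Φ with hW
  set μ : SF →ₗ[F] Q := Φ.domRestrict SF with hμ
  set K : Submodule F SF := LinearMap.ker μ with hK
  -- linear independence of g over F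
  have hindep : LinearIndependent F g := by
    rw [Fintype.linearIndependent_iff]
    intro c hc i
    have hsum : (∑ j, c j • g j)
        = π (∑ j, (algebraMap F R (c j) * u ^ n) • bM' j) := by
      rw [map_sum]
      refine Finset.sum_congr rfl fun j _ => ?_
      rw [hg]
      show c j • π (u ^ n • bM' j) = π ((algebraMap F R (c j) * u ^ n) • bM' j)
      rw [mul_smul, algebraMap_smul, map_smul]
      exact (LinearMap.map_smul_of_tower π (c j) _).symm
    rw [hsum] at hc
    have hmem : (∑ j, (algebraMap F R (c j) * u ^ n) • bM' j) ∈ U := by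
      rwa [hπ, Submodule.mkQ_apply, Submodule.Quotient.mk_eq_zero] at hc
    obtain ⟨y, hy⟩ := (memU _).mp hmem
    have hy2 := congrArg (fun z => bM'.repr z i) hy
    simp only [map_smul, Finsupp.smul_apply, Module.Basis.repr_sum_self] at hy2
    exact trunc_aux1 hn2 (c i) (bM'.repr y i) hy2.symm
  haveI : Module.Finite F Q := Module.Finite.quotient F U
  have hKd : d ≤ Module.finrank F K := by
    set gv : Fin d → K := fun i => ⟨⟨g i, (hmemSF _).mpr (hg_range i)⟩, by
      rw [hK, LinearMap.mem_ker]
      show u • g i = 0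
      exact hgu i⟩ with hgv
    have hgvind : LinearIndependent F gv :=
      LinearIndependent.of_comp ((SF.subtype).comp K.subtype) (by exact hindep)
    simpa using hgvind.fintype_card_le_finrank
  have hrn : Module.finrank F W + Module.finrank F K = Module.finrank F SF := by
    have h3 := LinearMap.finrank_range_add_finrank_ker μ
    rwa [hμ, LinearMap.range_domRestrict] at h3
  set i0 : Fin d := ⟨0, hd⟩ with hi0
  set T : Submodule F Q :=
    Submodule.span F (Set.range (fun j : {j : Fin d // j ≠ i0} => fb (bM j))) with hT
  have hSTW : SF ≤ T ⊔ W := by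
    intro x hx
    have hx' : x ∈ Submodule.span R (Set.range fun i => fb (bM i)) := by
      rw [← hSspan]; exact (hmemSF _).mp hx
    refine Submodule.span_induction ?_ ?_ ?_ ?_ hx'
    · rintro x ⟨i, rfl⟩
      show fb (bM i) ∈ T ⊔ W
      by_cases hi : i = i0
      · rw [hi, hf0]
        exact Submodule.zero_mem _
      · exact Submodule.mem_sup_left (Submodule.subset_span ⟨⟨i, hi⟩, rfl⟩)
    · exact Submodule.zero_mem _
    · intro x y _ _ hx1 hy1
      exact Submodule.add_mem _ hx1 hy1
    · intro r x hxspan hxTW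
      have hxS : x ∈ S := by rw [hSspan]; exact hxspan
      obtain ⟨c, r', hr⟩ := trunc_aux2 r
      rw [← hu] at hr
      rw [hr, add_smul, mul_smul]
      refine Submodule.add_mem _ ?_ ?_
      · rw [algebraMap_smul]
        exact Submodule.smul_mem _ _ hxTW
      · refine Submodule.mem_sup_right ?_
        rw [hW]
        exact ⟨r' • x, (hmemSF _).mpr (S.smul_mem r' hxS), rfl⟩
  have hfrT : Module.finrank F T ≤ d - 1 := by
    have h1 := finrank_span_le_card (R := F)
      (Set.range (fun j : {j : Fin d // j ≠ i0} => fb (bM j)))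
    refine h1.trans ?_
    rw [Set.toFinset_range]
    refine (Finset.card_image_le).trans ?_
    rw [Finset.card_univ]
    have : Fintype.card {j : Fin d // j ≠ i0} = d - 1 := by
      rw [Fintype.card_subtype_compl, Fintype.card_subtype_eq, Fintype.card_fin]
    omega
  have hmono : Module.finrank F SF ≤ Module.finrank F (T ⊔ W : Submodule F Q) :=
    Submodule.finrank_mono hSTW
  have hsup := Submodule.finrank_sup_add_finrank_inf_eq T W
  omega

theorem stmt_3 (p e : ℕ) (hp : p.Prime) (he : 0 < e) (hcop : Nat.Coprime e p)
    (F : Type*) [Field F] [CharP F p]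
    (d : ℕ) (hd : 0 < d)
    (M M' : Type*) [AddCommGroup M] [AddCommGroup M']
    [Module (TruncRing F (e * p)) M] [Module (TruncRing F (e * p)) M']
    (bM : Module.Basis (Fin d) (TruncRing F (e * p)) M)
    (bM' : Module.Basis (Fin d) (TruncRing F (e * p)) M')
    (f : M →ₗ[TruncRing F (e * p)] M')
    (n : ℕ) (hn : 0 < n) (hn2 : n + 1 ≤ e * p)
    (hfe : ∃ m' : M', f (bM ⟨0, hd⟩) = uElt F (e * p) ^ (n + 1) • m') :
    ¬ ∀ m' : M', uElt F (e * p) ^ n • m' ∈ LinearMap.range f :=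
  trunc_main F (e * p) d hd M M' bM bM' f n hn2 hfe
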